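/- If B is a right intensity matrix (a real square matrix with nonnegative off-diagonal entries and all row sums zero), then for every t ≥ 0 the matrix exp(t·B) is right stochastic, i.e., all entries are nonnegative and all row sums equal one. -/

import Mathlib

open Matrix Nat

section Aux
variable {Z : Type*} [Fintype Z] [DecidableEq Z]

lemma exp_summable (A : Matrix Z Z ℝ) :
    Summable (fun n : ℕ => ((n ! : ℝ)⁻¹) • A ^ n) := by
  letI : SeminormedRing (Matrix Z Z ℝ) := Matrix.linftyOpSemiNormedRing
  letI : NormedRing (Matrix Z Z ℝ) := Matrix.linftyOpNormedRing
  letI : NormedAlgebra ℝ (Matrix Z Z ℝ) := Matrix.linftyOpNormedAlgebra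
  exact NormedSpace.expSeries_summable' (𝕂 := ℝ) A

lemma exp_apply_eq (A : Matrix Z Z ℝ) (i j : Z) :
    NormedSpace.exp A i j = ∑' n : ℕ, ((n ! : ℝ)⁻¹) * ((A ^ n) i j) := by
  have hs := exp_summable A
  rw [NormedSpace.exp_eq_tsum (𝕂 := ℝ)]
  have h1 : (∑' n : ℕ, ((n ! : ℝ)⁻¹) • A ^ n) i j
      = ∑' n : ℕ, (((n ! : ℝ)⁻¹) • A ^ n) i j := by
    have h := tsum_apply (f := fun n : ℕ => ((n ! : ℝ)⁻¹) • A ^ n) (x := i) hs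
    exact (congrFun h j).trans (tsum_apply (x := j) (Pi.summable.mp hs i))
  show (∑' n : ℕ, ((n ! : ℝ)⁻¹) • A ^ n) i j = _
  rw [h1]
  simp [Matrix.smul_apply]

lemma exp_entry_summable (A : Matrix Z Z ℝ) (i j : Z) :
    Summable (fun n : ℕ => ((n ! : ℝ)⁻¹) * ((A ^ n) i j)) := by
  have hs := exp_summable A
  have h := Pi.summable.mp (Pi.summable.mp hs i) j
  simpa [Matrix.smul_apply] using h

end Aux

section Main
variable {Z : Type*} [Fintype Z] [DecidableEq Z]

lemma exp_smul_one (c : ℝ) :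
    NormedSpace.exp (c • (1 : Matrix Z Z ℝ)) = Real.exp c • (1 : Matrix Z Z ℝ) := by
  letI : SeminormedRing (Matrix Z Z ℝ) := Matrix.linftyOpSemiNormedRing
  letI : NormedRing (Matrix Z Z ℝ) := Matrix.linftyOpNormedRing
  letI : NormedAlgebra ℝ (Matrix Z Z ℝ) := Matrix.linftyOpNormedAlgebra
  have := NormedSpace.algebraMap_exp_comm (𝕂 := ℝ) (𝔸 := Matrix Z Z ℝ) c
  rw [← Algebra.algebraMap_eq_smul_one, ← Algebra.algebraMap_eq_smul_one, Real.exp_eq_exp_ℝ]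
  exact this.symm

lemma pow_entry_nonneg (A : Matrix Z Z ℝ) (hA : ∀ i j, 0 ≤ A i j) (n : ℕ) :
    ∀ i j, 0 ≤ (A ^ n) i j := by
  induction n with
  | zero => intro i j; simp [Matrix.one_apply]; positivity
  | succ n ih =>
    intro i j
    rw [pow_succ, Matrix.mul_apply]
    exact Finset.sum_nonneg fun k _ => mul_nonneg (ih i k) (hA k j)

lemma pow_row_sum (A : Matrix Z Z ℝ) (hA : ∀ i, ∑ j, A i j = 0) (n : ℕ) (hn : n ≠ 0) (i : Z) :
    ∑ j, (A ^ n) i j = 0 := by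
  obtain ⟨m, rfl⟩ := Nat.exists_eq_succ_of_ne_zero hn
  rw [pow_succ]
  calc ∑ j, (A ^ m * A) i j = ∑ j, ∑ k, (A ^ m) i k * A k j := by
        simp [Matrix.mul_apply]
    _ = ∑ k, (A ^ m) i k * ∑ j, A k j := by
        rw [Finset.sum_comm]; simp [Finset.mul_sum]
    _ = 0 := by simp [hA]

end Main

/-- For a right intensity matrix `B` (nonnegative off-diagonal entries,
zero row sums), `exp (t • B)` is right stochastic for every `t ≥ 0`. -/
theorem exp_intensity_isStochastic {Z : Type*} [Fintype Z] [DecidableEq Z]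
    (B : Matrix Z Z ℝ)
    (hoff : ∀ i j, i ≠ j → 0 ≤ B i j)
    (hrow : ∀ i, ∑ j, B i j = 0) :
    ∀ t : ℝ, 0 ≤ t →
      (∀ i j, 0 ≤ NormedSpace.exp (t • B) i j) ∧
      (∀ i, ∑ j, NormedSpace.exp (t • B) i j = 1) := by
  intro t ht
  -- diagonal entries are nonpositive
  have hdiag : ∀ i, B i i ≤ 0 := by
    intro i
    have h := hrow i
    rw [← Finset.add_sum_erase _ _ (Finset.mem_univ i)] at h
    have hrest : 0 ≤ ∑ j ∈ Finset.univ.erase i, B i j :=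
      Finset.sum_nonneg fun j hj => hoff i j (Finset.ne_of_mem_erase hj).symm
    linarith
  set c : ℝ := t * ∑ k, (-B k k) with hc_def
  have hsum_nonneg : 0 ≤ ∑ k, (-B k k) :=
    Finset.sum_nonneg fun k _ => neg_nonneg.mpr (hdiag k)
  have hc : 0 ≤ c := mul_nonneg ht hsum_nonneg
  set A : Matrix Z Z ℝ := t • B + c • (1 : Matrix Z Z ℝ) with hA_def
  have hA : ∀ i j, 0 ≤ A i j := by
    intro i j
    by_cases hij : i = j
    · subst hij
      have h1 : (-B i i) ≤ ∑ k, (-B k k) :=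
        Finset.single_le_sum (f := fun k => -B k k)
          (fun k _ => neg_nonneg.mpr (hdiag k)) (Finset.mem_univ i)
      have h2 : t * (-B i i) ≤ c := mul_le_mul_of_nonneg_left h1 ht
      simp only [hA_def, Matrix.add_apply, Matrix.smul_apply, Matrix.one_apply_eq,
        smul_eq_mul, mul_one]
      nlinarith
    · simp only [hA_def, Matrix.add_apply, Matrix.smul_apply, Matrix.one_apply_ne hij,
        smul_eq_mul, mul_zero, add_zero]
      exact mul_nonneg ht (hoff i j hij)
  -- exp A has nonnegative entries
  have hexpA : ∀ i j, 0 ≤ NormedSpace.exp A i j := by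
    intro i j
    rw [exp_apply_eq]
    refine tsum_nonneg fun n => mul_nonneg (by positivity) (pow_entry_nonneg A hA n i j)
  -- exp (t•B) = exp (-c) • exp A
  have hcomm : Commute (t • B) (c • (1 : Matrix Z Z ℝ)) :=
    (Commute.one_right (t • B)).smul_right c
  have hsplit : NormedSpace.exp A
      = Real.exp c • NormedSpace.exp (t • B) := by
    rw [hA_def, Matrix.exp_add_of_commute _ _ hcomm, exp_smul_one, Matrix.mul_smul, mul_one]
  have hkey : NormedSpace.exp (t • B) = (Real.exp c)⁻¹ • NormedSpace.exp A := by
    rw [hsplit, smul_smul, inv_mul_cancel₀ (Real.exp_ne_zero c), one_smul]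
  constructor
  · intro i j
    rw [hkey]
    simp only [Matrix.smul_apply, smul_eq_mul]
    exact mul_nonneg (by positivity) (hexpA i j)
  · intro i
    have hsummable : ∀ j ∈ Finset.univ, Summable
        (fun n : ℕ => ((n ! : ℝ)⁻¹) * (((t • B) ^ n) i j)) :=
      fun j _ => exp_entry_summable (t • B) i j
    have hrowsum : ∀ k, ∑ j, (t • B) k j = 0 := by
      intro k
      simp [Matrix.smul_apply, ← Finset.mul_sum, hrow k]
    calc ∑ j, NormedSpace.exp (t • B) i j
        = ∑ j, ∑' n : ℕ, ((n ! : ℝ)⁻¹) * (((t • B) ^ n) i j) := by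
          exact Finset.sum_congr rfl fun j _ => exp_apply_eq (t • B) i j
      _ = ∑' n : ℕ, ∑ j, ((n ! : ℝ)⁻¹) * (((t • B) ^ n) i j) :=
          (Summable.tsum_finsetSum hsummable).symm
      _ = 1 := by
          rw [tsum_eq_single 0]
          · simp [Matrix.one_apply]
          · intro n hn
            rw [← Finset.mul_sum, pow_row_sum (t • B) hrowsum n hn i, mul_zero]
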